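/- Assume λ₁ > μ₁ and the coexistence condition. Let n : [0,∞) → ℝ⁴ be differentiable with n'(t) = F(n(t)) for all t ≥ 0 and n(0) ∈ (0,∞)⁴. Then there exists ϱ > 0 such that liminf_{t→∞} ‖n(t) − (n̄₁ₐ, 0, 0, 0)‖₁ ≥ ϱ, where ‖·‖₁ is the ℓ¹-norm on ℝ⁴ (the virus-free equilibrium is a uniform strong repeller). -/

import Mathlib

open Filter
open Set Topology

/-- The host–virus vector field in coordinates `(n₁ₐ, n₁d, n₁ᵢ, n₂)`. -/
noncomputable def hostVirusField (lam mu C D q kap sig r v mu2 m : ℝ)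
    (n : Fin 4 → ℝ) : Fin 4 → ℝ :=
  ![n 0 * (lam - mu - C * (n 0 + n 1 + n 2) - D * n 3) + sig * n 1 + r * n 2,
    q * D * n 0 * n 3 - (kap * mu + sig) * n 1,
    (1 - q) * D * n 0 * n 3 - (r + v) * n 2,
    m * v * n 2 - (1 - q) * D * n 0 * n 3 - mu2 * n 3]



/-- Monotonicity from nonnegative derivative on a closed interval. -/
lemma mono_le {f f' : ℝ → ℝ} {a b : ℝ} (hab : a ≤ b)
    (hd : ∀ t ∈ Icc a b, HasDerivAt f (f' t) t)
    (h0 : ∀ t ∈ Icc a b, 0 ≤ f' t) : f a ≤ f b := by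
  rcases eq_or_lt_of_le hab with h | h
  · simp [h]
  have hmono : MonotoneOn f (Icc a b) := by
    apply monotoneOn_of_deriv_nonneg (convex_Icc a b)
    · exact fun t ht => (hd t ht).continuousAt.continuousWithinAt
    · intro t ht
      rw [interior_Icc] at ht
      exact (hd t (Ioo_subset_Icc_self ht)).differentiableAt.differentiableWithinAt
    · intro t ht
      rw [interior_Icc] at ht
      rw [(hd t (Ioo_subset_Icc_self ht)).deriv]
      exact h0 t (Ioo_subset_Icc_self ht)
  exact hmono (left_mem_Icc.2 hab) (right_mem_Icc.2 hab) hab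

/-- Lower Grönwall: if `f' ≥ -K f` on `[a,b]` then `f b ≥ f a * exp (-K (b-a))`. -/
lemma gronwall_lower {f f' : ℝ → ℝ} {K a b : ℝ} (hab : a ≤ b)
    (hd : ∀ t ∈ Icc a b, HasDerivAt f (f' t) t)
    (h : ∀ t ∈ Icc a b, -K * f t ≤ f' t) :
    f a * Real.exp (-K * (b - a)) ≤ f b := by
  have hg : ∀ t ∈ Icc a b, HasDerivAt (fun s => f s * Real.exp (K * s))
      (f' t * Real.exp (K * t) + f t * (K * Real.exp (K * t))) t := by
    intro t ht
    have he : HasDerivAt (fun s : ℝ => Real.exp (K * s)) (K * Real.exp (K * t)) t := by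
      simpa [mul_comm] using (((hasDerivAt_id t).const_mul K).exp)
    exact (hd t ht).mul he
  have h0 : ∀ t ∈ Icc a b, 0 ≤ f' t * Real.exp (K * t) + f t * (K * Real.exp (K * t)) := by
    intro t ht
    have he : 0 < Real.exp (K * t) := Real.exp_pos _
    nlinarith [h t ht, he]
  have key := mono_le hab hg h0
  have heb : (0:ℝ) < Real.exp (-(K * b)) := Real.exp_pos _
  calc f a * Real.exp (-K * (b - a))
      = (f a * Real.exp (K * a)) * Real.exp (-(K * b)) := by
        rw [mul_assoc, ← Real.exp_add]; ring_nf
    _ ≤ (f b * Real.exp (K * b)) * Real.exp (-(K * b)) := by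
        apply mul_le_mul_of_nonneg_right key heb.le
    _ = f b := by rw [mul_assoc, ← Real.exp_add]; simp

/-- Barrier lemma: if `f a ≤ θ` and the derivative is negative whenever `f = θ`,
then `f ≤ θ` on `[a,b]`. -/
lemma barrier_le {f f' : ℝ → ℝ} {a b θ : ℝ}
    (hd : ∀ t ∈ Icc a b, HasDerivAt f (f' t) t)
    (hstart : f a ≤ θ)
    (hbar : ∀ t ∈ Icc a b, f t = θ → f' t < 0) :
    ∀ t ∈ Icc a b, f t ≤ θ := by
  by_contra hcon
  push_neg at hcon
  obtain ⟨t₀, ht₀, ht₀'⟩ := hcon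
  have hab : a ≤ b := ht₀.1.trans ht₀.2
  set S : Set ℝ := {t | t ∈ Icc a b ∧ θ < f t} with hS
  have hSne : S.Nonempty := ⟨t₀, ht₀, ht₀'⟩
  have hSsub : S ⊆ Icc a b := fun t ht => ht.1
  have hSbdd : BddBelow S := ⟨a, fun t ht => ht.1.1⟩
  set τ := sInf S with hτ
  have hτglb : IsGLB S τ := isGLB_csInf hSne hSbdd
  have hτcl : τ ∈ closure S := hτglb.mem_closure hSne
  have hτI : τ ∈ Icc a b := by
    have : closure S ⊆ Icc a b := closure_minimal hSsub isClosed_Icc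
    exact this hτcl
  have hnb : (𝓝[S] τ).NeBot := mem_closure_iff_nhdsWithin_neBot.1 hτcl
  have htend : Tendsto f (𝓝[S] τ) (𝓝 (f τ)) :=
    ((hd τ hτI).continuousAt.continuousWithinAt : ContinuousWithinAt f S τ)
  have hge : θ ≤ f τ := by
    apply ge_of_tendsto htend
    filter_upwards [self_mem_nhdsWithin] with t ht
    exact le_of_lt ht.2
  -- show f τ = θ
  have hne : f τ = θ := by
    rcases eq_or_lt_of_le hge with h | h
    · exact h.symm
    · exfalso
      have hτa : a < τ := by
        rcases eq_or_lt_of_le hτI.1 with h' | h'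
        · exfalso; rw [← h'] at h; exact absurd hstart (not_le.2 h)
        · exact h'
      have hev : ∀ᶠ t in 𝓝 τ, θ < f t :=
        ContinuousAt.eventually_lt (continuousAt_const) (hd τ hτI).continuousAt h
      obtain ⟨ε, hε, hball⟩ := Metric.eventually_nhds_iff.1 hev
      set t₁ := max a (τ - ε/2) with ht₁
      have ht₁τ : t₁ < τ := by
        apply max_lt hτa; linarith
      have ht₁I : t₁ ∈ Icc a b := ⟨le_max_left _ _, ht₁τ.le.trans hτI.2⟩
      have ht₁S : t₁ ∈ S := by
        refine ⟨ht₁I, hball ?_⟩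
        rw [Real.dist_eq, abs_lt]
        have h1 : τ - ε/2 ≤ t₁ := le_max_right _ _
        constructor <;> [linarith; linarith]
      have := hτglb.1 ht₁S
      linarith
  have hder := hbar τ hτI hne
  have hτS : τ ∉ S := by
    intro h
    have h2 := h.2
    rw [hne] at h2
    exact lt_irrefl _ h2
  have hSsub' : S ⊆ {x | x ≠ τ} := by
    intro t ht h; rw [h] at ht; exact hτS ht
  have hslope : Tendsto (slope f τ) (𝓝[S] τ) (𝓝 (f' τ)) := by
    have := hasDerivAt_iff_tendsto_slope.1 (hd τ hτI)
    exact this.mono_left (nhdsWithin_mono τ hSsub')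
  have : 0 ≤ f' τ := by
    apply ge_of_tendsto hslope
    filter_upwards [self_mem_nhdsWithin] with t ht
    have htτ : τ ≤ t := hτglb.1 ht
    have htτ' : τ < t := lt_of_le_of_ne htτ (fun h => hSsub' ht h.symm)
    rw [slope_def_field]
    have h1 : 0 < f t - f τ := by rw [hne]; linarith [ht.2]
    have h2 : 0 < t - τ := by linarith
    exact le_of_lt (div_pos h1 h2)
  linarith

/-- Forced decay: if `f' ≤ -c` whenever `f ≥ θ`, and `f a ≤ M`, then after
time `(M - θ)/c` the function stays `≤ θ`. -/
lemma forced_decay {f f' : ℝ → ℝ} {a b θ c M : ℝ} (hc : 0 < c)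
    (hd : ∀ t ∈ Icc a b, HasDerivAt f (f' t) t)
    (hM : f a ≤ M)
    (hdec : ∀ t ∈ Icc a b, θ ≤ f t → f' t ≤ -c) :
    ∀ t ∈ Icc a b, a + (M - θ)/c ≤ t → f t ≤ θ := by
  intro t ht htt
  by_cases hex : ∃ s ∈ Icc a t, f s ≤ θ
  · obtain ⟨s, hs, hfs⟩ := hex
    have hsub : Icc s t ⊆ Icc a b := Icc_subset_Icc hs.1 ht.2
    exact barrier_le (fun u hu => hd u (hsub hu)) hfs
      (fun u hu hfu => lt_of_le_of_lt (hdec u (hsub hu) (le_of_eq hfu.symm)) (by linarith))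
      t ⟨hs.2, le_refl t⟩
  · push_neg at hex
    have hsub : Icc a t ⊆ Icc a b := Icc_subset_Icc (le_refl a) ht.2
    have hat : a ≤ t := ht.1
    have hcid : ∀ s : ℝ, HasDerivAt (fun y : ℝ => c * y) c s := by
      intro s
      simpa using (hasDerivAt_id s).const_mul c
    have hmono := mono_le hat
      (f := fun s => -(f s) - c * s) (f' := fun s => -(f' s) - c)
      (fun s hs => ((hd s (hsub hs)).neg).sub (hcid s))
      (fun s hs => by
        have := hdec s (hsub hs) (le_of_lt (hex s hs))
        show 0 ≤ -(f' s) - c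
        linarith)
    have hgoal : f t ≤ f a - c * (t - a) := by nlinarith
    have h2 : (M - θ)/c ≤ t - a := by linarith
    rw [div_le_iff₀ hc] at h2
    linarith

/-- Last crossing: if `f T < θ` then there is `a ∈ [0,T]` with
`min θ (f 0) ≤ f a` and `f ≤ θ` on `[a,T]`. -/
lemma lastCrossing {f : ℝ → ℝ} {T θ : ℝ} (hT : 0 ≤ T)
    (hcont : ∀ t ∈ Icc (0:ℝ) T, ContinuousAt f t) (hfT : f T < θ) :
    ∃ a, 0 ≤ a ∧ a ≤ T ∧ min θ (f 0) ≤ f a ∧ ∀ t ∈ Icc a T, f t ≤ θ := by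
  set S : Set ℝ := {t | t ∈ Icc (0:ℝ) T ∧ θ ≤ f t} with hS
  by_cases hne : S.Nonempty
  · have hCon : ContinuousOn f (Icc (0:ℝ) T) :=
      fun t ht => (hcont t ht).continuousWithinAt
    have hclosed : IsClosed S := by
      have : S = Icc (0:ℝ) T ∩ f ⁻¹' Ici θ := by
        ext t; simp only [hS, mem_setOf_eq, mem_inter_iff, mem_preimage, mem_Ici]
      rw [this]
      exact hCon.preimage_isClosed_of_isClosed isClosed_Icc isClosed_Ici
    have hbdd : BddAbove S := ⟨T, fun t ht => ht.1.2⟩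
    set a := sSup S with ha
    have haS : a ∈ S := hclosed.csSup_mem hne hbdd
    have halub : IsLUB S a := isLUB_csSup hne hbdd
    have haI : a ∈ Icc (0:ℝ) T := haS.1
    have haT : a < T := by
      rcases eq_or_lt_of_le haI.2 with h | h
      · exfalso; rw [h] at haS; exact absurd haS.2 (not_le.2 hfT)
      · exact h
    have hkey : f a ≤ θ := by
      have hnb : (𝓝[Ioc a T] a).NeBot := by
        rw [← mem_closure_iff_nhdsWithin_neBot, closure_Ioc (ne_of_lt haT)]
        exact ⟨le_refl a, haT.le⟩
      have htend : Tendsto f (𝓝[Ioc a T] a) (𝓝 (f a)) :=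
        ((hcont a haI).continuousWithinAt : ContinuousWithinAt f (Ioc a T) a)
      apply le_of_tendsto htend
      filter_upwards [self_mem_nhdsWithin] with s hs
      by_contra hcon
      push_neg at hcon
      have hsS : s ∈ S := ⟨⟨haI.1.trans hs.1.le, hs.2⟩, hcon.le⟩
      exact absurd (halub.1 hsS) (not_le.2 hs.1)
    refine ⟨a, haI.1, haI.2, le_trans (min_le_left _ _) haS.2, ?_⟩
    intro t ht
    rcases eq_or_lt_of_le ht.1 with h | h
    · rw [← h]; exact hkey
    · by_contra hcon
      push_neg at hcon
      have : t ∈ S := ⟨⟨haI.1.trans h.le, ht.2⟩, hcon.le⟩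
      exact absurd (halub.1 this) (not_le.2 h)
  · refine ⟨0, le_refl 0, hT, ?_, ?_⟩
    · have h0 : (0:ℝ) ∉ S := fun h => hne ⟨0, h⟩
      exact min_le_right _ _
    · intro t ht
      by_contra hcon
      push_neg at hcon
      exact hne ⟨t, ⟨ht, hcon.le⟩⟩

/-- Extract a component derivative from a vector-valued derivative. -/
lemma hasDerivAt_comp_proj {n : ℝ → Fin 4 → ℝ} {v : Fin 4 → ℝ} {t : ℝ}
    (h : HasDerivAt n v t) (i : Fin 4) : HasDerivAt (fun s => n s i) (v i) t := by
  have h1 : HasFDerivAt n (ContinuousLinearMap.smulRight (1 : ℝ →L[ℝ] ℝ) v) t :=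
    h.hasFDerivAt
  have h2 := ((ContinuousLinearMap.proj i :
      (Fin 4 → ℝ) →L[ℝ] ℝ)).hasFDerivAt.comp t h1
  have h3 := h2.hasDerivAt
  exact hasDerivAt_pi.1 h i

open Set Filter Topology in
set_option maxHeartbeats 4000000 in
theorem virus_free_uniform_strong_repeller
    (lam mu C D q kap sig r v mu2 m : ℝ)
    (hmu : 0 < mu) (hlm : mu < lam) (hC : 0 < C) (hD : 0 < D)
    (hq0 : 0 < q) (hq1 : q < 1) (hkap : 0 ≤ kap) (hsig : 0 < sig)
    (hr : 0 < r) (hv : 0 < v) (hmu2 : 0 < mu2) (hm : 0 < m)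
    (hcoex : (m * v - (r + v)) * (1 - q) * D * ((lam - mu) / C) > mu2 * (r + v))
    (n : ℝ → (Fin 4 → ℝ))
    (hderiv : ∀ t : ℝ, 0 ≤ t → HasDerivAt n (hostVirusField lam mu C D q kap sig r v mu2 m (n t)) t)
    (hinit : ∀ i, 0 < n 0 i) :
    ∃ ρ > (0 : ℝ),
      ρ ≤ Filter.liminf
        (fun t : ℝ => ∑ i : Fin 4, |n t i - ![(lam - mu) / C, 0, 0, 0] i|) atTop := by
  -- component derivative formulas
  set fA : ℝ → ℝ := fun t => n t 0 * (lam - mu - C * (n t 0 + n t 1 + n t 2) - D * n t 3)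
      + sig * n t 1 + r * n t 2 with hfA
  set fD : ℝ → ℝ := fun t => q * D * n t 0 * n t 3 - (kap * mu + sig) * n t 1 with hfD
  set fI : ℝ → ℝ := fun t => (1 - q) * D * n t 0 * n t 3 - (r + v) * n t 2 with hfI
  set fP : ℝ → ℝ := fun t => m * v * n t 2 - (1 - q) * D * n t 0 * n t 3 - mu2 * n t 3 with hfP
  have hA : ∀ t : ℝ, 0 ≤ t → HasDerivAt (fun s => n s 0) (fA t) t := by
    intro t ht
    simpa [hostVirusField] using hasDerivAt_comp_proj (hderiv t ht) 0
  have hDm : ∀ t : ℝ, 0 ≤ t → HasDerivAt (fun s => n s 1) (fD t) t := by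
    intro t ht
    simpa [hostVirusField] using hasDerivAt_comp_proj (hderiv t ht) 1
  have hIv : ∀ t : ℝ, 0 ≤ t → HasDerivAt (fun s => n s 2) (fI t) t := by
    intro t ht
    simpa [hostVirusField] using hasDerivAt_comp_proj (hderiv t ht) 2
  have hP : ∀ t : ℝ, 0 ≤ t → HasDerivAt (fun s => n s 3) (fP t) t := by
    intro t ht
    simpa [hostVirusField] using hasDerivAt_comp_proj (hderiv t ht) 3
  -- continuity of each coordinate on [0,∞)
  have hcontA : ∀ t : ℝ, 0 ≤ t → ContinuousAt (fun s => n s 0) t :=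
    fun t ht => (hA t ht).continuousAt
  have hcontD : ∀ t : ℝ, 0 ≤ t → ContinuousAt (fun s => n s 1) t :=
    fun t ht => (hDm t ht).continuousAt
  have hcontI : ∀ t : ℝ, 0 ≤ t → ContinuousAt (fun s => n s 2) t :=
    fun t ht => (hIv t ht).continuousAt
  have hcontP : ∀ t : ℝ, 0 ≤ t → ContinuousAt (fun s => n s 3) t :=
    fun t ht => (hP t ht).continuousAt
  -- positivity of all coordinates
  have hpos : ∀ T : ℝ, 0 ≤ T → ∀ i, 0 < n T i := by
    intro T hT
    have hcontN : ContinuousOn n (Icc (0:ℝ) T) :=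
      fun t ht => ((hderiv t ht.1).continuousAt).continuousWithinAt
    obtain ⟨M0, hM0⟩ := isCompact_Icc.exists_bound_of_continuousOn hcontN
    obtain ⟨M, hM, hMnn⟩ : ∃ M, (∀ t ∈ Icc (0:ℝ) T, ∀ i, |n t i| ≤ M) ∧ 0 ≤ M := by
      refine ⟨max M0 0, ?_, le_max_right _ _⟩
      intro t ht i
      calc |n t i| = ‖n t i‖ := rfl
        _ ≤ ‖n t‖ := norm_le_pi_norm (n t) i
        _ ≤ M0 := hM0 t ht
        _ ≤ max M0 0 := le_max_left _ _
    obtain ⟨K, hK0, hK1, hK2, hK3, hK4⟩ : ∃ K, 0 ≤ K ∧ |lam - mu| + 3*C*M + D*M ≤ K ∧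
        kap*mu + sig ≤ K ∧ r + v ≤ K ∧ (1-q)*D*M + mu2 ≤ K := by
      refine ⟨|lam - mu| + 3*C*M + D*M + (kap*mu + sig) + (r + v) + ((1-q)*D*M + mu2),
        ?_, ?_, ?_, ?_, ?_⟩ <;>
      · have h1 : 0 ≤ |lam - mu| := abs_nonneg _
        have h2 : 0 ≤ 3*C*M := by positivity
        have h3 : 0 ≤ D*M := by positivity
        have h4 : 0 ≤ kap*mu := mul_nonneg hkap hmu.le
        have h5 : 0 ≤ (1-q)*D*M := by
          have : (0:ℝ) ≤ 1 - q := by linarith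
          positivity
        linarith
    set g : ℝ → ℝ := fun t => min (min (n t 0) (n t 1)) (min (n t 2) (n t 3)) with hgdef
    have hgcont : ContinuousOn g (Icc (0:ℝ) T) := by
      apply ContinuousOn.inf
      · exact ContinuousOn.inf (fun t ht => (hcontA t ht.1).continuousWithinAt)
          (fun t ht => (hcontD t ht.1).continuousWithinAt)
      · exact ContinuousOn.inf (fun t ht => (hcontI t ht.1).continuousWithinAt)
          (fun t ht => (hcontP t ht.1).continuousWithinAt)
    set S : Set ℝ := Icc (0:ℝ) T ∩ g ⁻¹' Iic 0 with hSdef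
    have hg0 : 0 < g 0 := by
      simp only [hgdef, lt_min_iff]
      exact ⟨⟨hinit 0, hinit 1⟩, ⟨hinit 2, hinit 3⟩⟩
    by_cases hne : S.Nonempty
    · exfalso
      have hclosed : IsClosed S := hgcont.preimage_isClosed_of_isClosed isClosed_Icc isClosed_Iic
      have hbddS : BddBelow S := ⟨0, fun t ht => ht.1.1⟩
      have hτS : sInf S ∈ S := hclosed.csInf_mem hne hbddS
      have hglb : IsGLB S (sInf S) := isGLB_csInf hne hbddS
      obtain ⟨τ, hτeq⟩ : ∃ τ, τ = sInf S := ⟨sInf S, rfl⟩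
      rw [← hτeq] at hτS hglb
      have hτI : τ ∈ Icc (0:ℝ) T := hτS.1
      have hτbad : g τ ≤ 0 := hτS.2
      have hpre : ∀ t, 0 ≤ t → t < τ → ∀ i, 0 < n t i := by
        intro t ht0 htτ i
        have htS : t ∉ S := fun h => absurd (hglb.1 h) (not_le.2 htτ)
        have htI : t ∈ Icc (0:ℝ) T := ⟨ht0, htτ.le.trans hτI.2⟩
        have hgt : 0 < g t := by
          by_contra hcon
          push_neg at hcon
          exact htS ⟨htI, hcon⟩
        simp only [hgdef, lt_min_iff] at hgt
        fin_cases i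
        · exact hgt.1.1
        · exact hgt.1.2
        · exact hgt.2.1
        · exact hgt.2.2
      have hτ0 : 0 < τ := by
        rcases eq_or_lt_of_le hτI.1 with h | h
        · exfalso; rw [← h] at hτbad; linarith
        · exact h
      have hnonnegτ : ∀ i, 0 ≤ n τ i := by
        intro i
        have hnb : (𝓝[Ico (0:ℝ) τ] τ).NeBot := by
          rw [← mem_closure_iff_nhdsWithin_neBot, closure_Ico hτ0.ne]
          exact ⟨hτI.1, le_refl τ⟩
        have hc : ContinuousAt (fun s => n s i) τ := by
          fin_cases i
          · exact hcontA τ hτI.1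
          · exact hcontD τ hτI.1
          · exact hcontI τ hτI.1
          · exact hcontP τ hτI.1
        apply ge_of_tendsto (hc.continuousWithinAt : ContinuousWithinAt _ (Ico (0:ℝ) τ) τ)
        filter_upwards [self_mem_nhdsWithin] with s hs
        exact (hpre s hs.1 hs.2 i).le
      have hnonneg : ∀ t ∈ Icc (0:ℝ) τ, ∀ i, 0 ≤ n t i := by
        intro t ht i
        rcases eq_or_lt_of_le ht.2 with h | h
        · rw [h]; exact hnonnegτ i
        · exact (hpre t ht.1 h i).le
      have hτsub : Icc (0:ℝ) τ ⊆ Icc (0:ℝ) T := Icc_subset_Icc (le_refl 0) hτI.2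
      have hbig : ∀ t ∈ Icc (0:ℝ) τ,
          (-K * n t 0 ≤ fA t) ∧ (-K * n t 1 ≤ fD t) ∧ (-K * n t 2 ≤ fI t)
            ∧ (-K * n t 3 ≤ fP t) := by
        intro t ht
        have h0 := hnonneg t ht 0
        have h1 := hnonneg t ht 1
        have h2 := hnonneg t ht 2
        have h3 := hnonneg t ht 3
        have hb0 := (abs_le.1 (hM t (hτsub ht) 0)).2
        have hb1 := (abs_le.1 (hM t (hτsub ht) 1)).2
        have hb2 := (abs_le.1 (hM t (hτsub ht) 2)).2
        have hb3 := (abs_le.1 (hM t (hτsub ht) 3)).2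
        have habs : -|lam - mu| ≤ lam - mu := neg_abs_le _
        have hq1' : (0:ℝ) < 1 - q := by linarith
        have e0 : C * n t 0 ≤ C * M := mul_le_mul_of_nonneg_left hb0 hC.le
        have e1 : C * n t 1 ≤ C * M := mul_le_mul_of_nonneg_left hb1 hC.le
        have e2 : C * n t 2 ≤ C * M := mul_le_mul_of_nonneg_left hb2 hC.le
        have e3 : D * n t 3 ≤ D * M := mul_le_mul_of_nonneg_left hb3 hD.le
        refine ⟨?_, ?_, ?_, ?_⟩
        · have hcoef : -K ≤ lam - mu - C * (n t 0 + n t 1 + n t 2) - D * n t 3 := by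
            have : C * (n t 0 + n t 1 + n t 2) = C * n t 0 + C * n t 1 + C * n t 2 := by ring
            linarith
          have hmul := mul_le_mul_of_nonneg_left hcoef h0
          simp only [hfA]
          nlinarith [mul_nonneg hsig.le h1, mul_nonneg hr.le h2]
        · simp only [hfD]
          have hqd : 0 ≤ q * D * n t 0 * n t 3 := by positivity
          nlinarith [mul_le_mul_of_nonneg_right hK2 h1]
        · simp only [hfI]
          have hqd : 0 ≤ (1 - q) * D * n t 0 * n t 3 := by positivity
          nlinarith [mul_le_mul_of_nonneg_right hK3 h2]
        · simp only [hfP]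
          have hmv : 0 ≤ m * v * n t 2 := by positivity
          have hup : (1 - q) * D * n t 0 * n t 3 ≤ ((1-q)*D*M) * n t 3 := by
            have : (1 - q) * D * n t 0 ≤ (1-q)*D*M :=
              mul_le_mul_of_nonneg_left hb0 (by positivity)
            exact mul_le_mul_of_nonneg_right this h3
          nlinarith [mul_le_mul_of_nonneg_right hK4 h3]
      have hfinal : ∀ i, 0 < n τ i := by
        have gl : ∀ (x x' : ℝ → ℝ), (∀ t ∈ Icc (0:ℝ) τ, HasDerivAt x (x' t) t) →
            (∀ t ∈ Icc (0:ℝ) τ, -K * x t ≤ x' t) → 0 < x 0 → 0 < x τ := by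
          intro x x' hdx hineq hx0
          have hgr := gronwall_lower hτ0.le hdx hineq
          have he : 0 < Real.exp (-K * (τ - 0)) := Real.exp_pos _
          nlinarith
        intro i
        fin_cases i
        · exact gl _ fA (fun t ht => hA t ht.1) (fun t ht => (hbig t ht).1) (hinit 0)
        · exact gl _ fD (fun t ht => hDm t ht.1) (fun t ht => (hbig t ht).2.1) (hinit 1)
        · exact gl _ fI (fun t ht => hIv t ht.1) (fun t ht => (hbig t ht).2.2.1) (hinit 2)
        · exact gl _ fP (fun t ht => hP t ht.1) (fun t ht => (hbig t ht).2.2.2) (hinit 3)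
      have hgτ : 0 < g τ := by
        simp only [hgdef, lt_min_iff]
        exact ⟨⟨hfinal 0, hfinal 1⟩, ⟨hfinal 2, hfinal 3⟩⟩
      linarith
    · intro i
      have hTS : T ∉ S := fun h => hne ⟨T, h⟩
      have hTI : T ∈ Icc (0:ℝ) T := ⟨hT, le_refl T⟩
      have hgT : 0 < g T := by
        by_contra hcon
        push_neg at hcon
        exact hTS ⟨hTI, hcon⟩
      simp only [hgdef, lt_min_iff] at hgT
      fin_cases i
      · exact hgT.1.1
      · exact hgT.1.2
      · exact hgT.2.1
      · exact hgT.2.2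
  -- boundedness
  have hlm' : (0:ℝ) < lam - mu := by linarith
  have hnb0 : 0 < (lam - mu)/C := div_pos hlm' hC
  have hCnb : C * ((lam - mu)/C) = lam - mu := mul_div_cancel₀ _ hC.ne'
  obtain ⟨B1, hB1def⟩ : ∃ B1, B1 = n 0 0 + n 0 1 + n 0 2 + (lam - mu)/C + 1 := ⟨_, rfl⟩
  have hB1pos : 0 < B1 := by
    rw [hB1def]
    have := hinit 0; have := hinit 1; have := hinit 2
    linarith
  have hN1 : ∀ t, 0 ≤ t → n t 0 + n t 1 + n t 2 ≤ B1 := by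
    intro T hT
    have hder : ∀ t ∈ Icc (0:ℝ) T, HasDerivAt (fun s => n s 0 + n s 1 + n s 2)
        (fA t + fD t + fI t) t :=
      fun t ht => ((hA t ht.1).add (hDm t ht.1)).add (hIv t ht.1)
    have hstart : n 0 0 + n 0 1 + n 0 2 ≤ B1 := by rw [hB1def]; linarith
    have hbar : ∀ t ∈ Icc (0:ℝ) T, n t 0 + n t 1 + n t 2 = B1 →
        fA t + fD t + fI t < 0 := by
      intro t ht heq
      have hA0 := hpos t ht.1 0
      have h1 := hpos t ht.1 1
      have h2 := hpos t ht.1 2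
      have hsum : fA t + fD t + fI t
          = n t 0 * (lam - mu - C * (n t 0 + n t 1 + n t 2)) - kap*mu*n t 1 - v * n t 2 := by
        simp only [hfA, hfD, hfI]; ring
      rw [hsum, heq]
      have hcoef : lam - mu - C * B1 = -(C * (n 0 0 + n 0 1 + n 0 2)) - C := by
        rw [hB1def]; rw [mul_add, mul_add, hCnb]; ring
      have hS0 : 0 ≤ n 0 0 + n 0 1 + n 0 2 := by
        have := hinit 0; have := hinit 1; have := hinit 2; linarith
      have hneg : lam - mu - C * B1 < 0 := by
        rw [hcoef]; nlinarith
      nlinarith [mul_nonneg (mul_nonneg hkap hmu.le) h1.le, mul_pos hv h2]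
    exact barrier_le hder hstart hbar T ⟨hT, le_refl T⟩
  obtain ⟨B2, hB2def⟩ : ∃ B2, B2 = n 0 3 + m*v*B1/mu2 + 1 := ⟨_, rfl⟩
  have hmvB1 : mu2 * (m*v*B1/mu2) = m*v*B1 := mul_div_cancel₀ _ hmu2.ne'
  have hPB : ∀ t, 0 ≤ t → n t 3 ≤ B2 := by
    intro T hT
    have hstart : n 0 3 ≤ B2 := by
      rw [hB2def]
      have : 0 ≤ m*v*B1/mu2 := by positivity
      linarith
    have hbar : ∀ t ∈ Icc (0:ℝ) T, n t 3 = B2 → fP t < 0 := by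
      intro t ht heq
      have hA0 := hpos t ht.1 0
      have h2 := hpos t ht.1 2
      have h3 := hpos t ht.1 3
      have h1 := hpos t ht.1 1
      have hI2 : n t 2 ≤ B1 := by
        have := hN1 t ht.1
        linarith
      have hup : m * v * n t 2 ≤ m * v * B1 := by
        apply mul_le_mul_of_nonneg_left hI2 (by positivity)
      have hqd : 0 ≤ (1 - q) * D * n t 0 * n t 3 := by
        have : (0:ℝ) < 1 - q := by linarith
        positivity
      simp only [hfP]
      rw [heq] at *
      have : mu2 * B2 = mu2 * n 0 3 + m*v*B1 + mu2 := by
        rw [hB2def, mul_add, mul_add, hmvB1]; ring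
      nlinarith [mul_nonneg hmu2.le (hinit 3).le]
    exact barrier_le (fun t ht => hP t ht.1) hstart hbar T ⟨hT, le_refl T⟩
  obtain ⟨B, hBB1, hBB2, hBpos⟩ : ∃ B, B1 ≤ B ∧ B2 ≤ B ∧ 0 < B :=
    ⟨max B1 B2, le_max_left _ _, le_max_right _ _, lt_of_lt_of_le hB1pos (le_max_left _ _)⟩
  have hBd : ∀ t, 0 ≤ t → n t 0 ≤ B ∧ n t 1 ≤ B ∧ n t 2 ≤ B ∧ n t 3 ≤ B := by
    intro t ht
    have h0 := hpos t ht 0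
    have h1 := hpos t ht 1
    have h2 := hpos t ht 2
    have hs := hN1 t ht
    have h3 := hPB t ht
    exact ⟨by linarith, by linarith, by linarith, by linarith⟩
  -- coexistence constants
  obtain ⟨nb, hnbdef⟩ : ∃ nb : ℝ, nb = (lam - mu)/C := ⟨_, rfl⟩
  have hnbpos : 0 < nb := by rw [hnbdef]; exact hnb0
  have hq1' : (0:ℝ) < 1 - q := by linarith
  have hrv : (0:ℝ) < r + v := by linarith
  have hZpos : 0 < (1-q)*D*nb := by positivity
  have hcoex' : mu2*(r+v) < (m*v - (r+v)) * ((1-q)*D*nb) := by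
    have h := hcoex
    rw [← hnbdef] at h
    nlinarith only [h]
  have hmv1 : r + v < m*v := by
    by_contra hcon
    push_neg at hcon
    have h1 : 0 ≤ (r + v - m*v) * ((1-q)*D*nb) := mul_nonneg (by linarith) hZpos.le
    have h2 : 0 < mu2 * (r+v) := mul_pos hmu2 hrv
    nlinarith only [h1, h2, hcoex']
  obtain ⟨x, hxdef⟩ : ∃ x : ℝ, x = mu2/((1-q)*D*nb) := ⟨_, rfl⟩
  obtain ⟨y, hydef⟩ : ∃ y : ℝ, y = m*v/(r+v) - 1 := ⟨_, rfl⟩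
  have hxpos : 0 < x := by rw [hxdef]; positivity
  have hxZ : x * ((1-q)*D*nb) = mu2 := by rw [hxdef]; field_simp
  have hyrv : y * (r+v) = m*v - (r+v) := by rw [hydef]; field_simp
  have hypos : 0 < y := by
    rw [hydef]
    have := (one_lt_div hrv).2 hmv1
    linarith only [this]
  have hxy : x < y := by
    have hcpos : 0 < (r+v) * ((1-q)*D*nb) := mul_pos hrv hZpos
    have h1 : mu2 * (r+v) = x * ((r+v)*((1-q)*D*nb)) := by rw [← hxZ]; ring
    have h2 : (m*v - (r+v)) * ((1-q)*D*nb) = y * ((r+v)*((1-q)*D*nb)) := by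
      rw [← hyrv]; ring
    have key : x * ((r+v)*((1-q)*D*nb)) < y * ((r+v)*((1-q)*D*nb)) := by
      rw [← h1, ← h2]; exact hcoex'
    exact lt_of_mul_lt_mul_right key hcpos.le
  obtain ⟨al, haldef⟩ : ∃ al : ℝ, al = 1 + (x+y)/2 := ⟨_, rfl⟩
  have hal1 : 1 < al := by rw [haldef]; linarith
  obtain ⟨c1, hc1def⟩ : ∃ c1 : ℝ, c1 = m*v - al*(r+v) := ⟨_, rfl⟩
  have hc1pos : 0 < c1 := by
    rw [hc1def, haldef]
    have h1 : 0 < ((y-x)/2) * (r+v) := mul_pos (by linarith) hrv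
    nlinarith only [hyrv, h1]
  obtain ⟨d0, hd0def⟩ : ∃ d0 : ℝ, d0 = (al-1)*((1-q)*D*nb) - mu2 := ⟨_, rfl⟩
  have hd0pos : 0 < d0 := by
    rw [hd0def, haldef]
    have h1 : 0 < ((y-x)/2) * ((1-q)*D*nb) := mul_pos (by linarith) hZpos
    nlinarith only [hxZ, h1]
  obtain ⟨eta, hetadef⟩ : ∃ eta : ℝ, eta = min (nb/2) (d0/(2*((al-1)*((1-q)*D)))) := ⟨_, rfl⟩
  have hcal : 0 < (al-1)*((1-q)*D) := by
    have : 0 < al - 1 := by linarith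
    positivity
  have hetapos : 0 < eta := by
    rw [hetadef]
    apply lt_min (by linarith)
    positivity
  have hetanb : eta ≤ nb/2 := hetadef ▸ min_le_left _ _
  have hetad : (al-1)*((1-q)*D)*eta ≤ d0/2 := by
    have h1 : eta ≤ d0/(2*((al-1)*((1-q)*D))) := hetadef ▸ min_le_right _ _
    have := mul_le_mul_of_nonneg_left h1 hcal.le
    calc (al-1)*((1-q)*D)*eta ≤ (al-1)*((1-q)*D) * (d0/(2*((al-1)*((1-q)*D)))) := this
      _ = d0/2 := by have hne : al - 1 ≠ 0 := ne_of_gt (by linarith); field_simp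
  obtain ⟨eps, hepsdef⟩ : ∃ eps : ℝ, eps = min (c1/al) (d0/2) := ⟨_, rfl⟩
  have halpos : 0 < al := by linarith
  have hepspos : 0 < eps := by
    rw [hepsdef]
    exact lt_min (by positivity) (by linarith)
  have hepsal : eps * al ≤ c1 := by
    have h1 : eps ≤ c1/al := hepsdef ▸ min_le_left _ _
    calc eps * al ≤ (c1/al) * al := mul_le_mul_of_nonneg_right h1 halpos.le
      _ = c1 := by field_simp
  have hepsd : eps ≤ d0/2 := hepsdef ▸ min_le_right _ _
  -- the virus Lyapunov combination W = al * I + P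
  have hWexp : ∀ t : ℝ, al * fI t + fP t
      = c1 * n t 2 + ((al-1)*((1-q)*D)*n t 0 - mu2) * n t 3 := by
    intro t
    simp only [hfI, hfP, hc1def]
    ring
  have hWgrow : ∀ t, 0 ≤ t → nb - eta ≤ n t 0 →
      eps * (al * n t 2 + n t 3) ≤ al * fI t + fP t := by
    intro t ht hAt
    have hI2 := hpos t ht 2
    have hP3 := hpos t ht 3
    rw [hWexp t]
    have hcoefl : mu2 + d0/2 ≤ (al-1)*((1-q)*D)*n t 0 := by
      have h1 : (al-1)*((1-q)*D)*(nb - eta) ≤ (al-1)*((1-q)*D)*n t 0 :=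
        mul_le_mul_of_nonneg_left hAt hcal.le
      have h2 : (al-1)*((1-q)*D)*(nb-eta) = (al-1)*((1-q)*D*nb) - (al-1)*((1-q)*D)*eta := by
        ring
      rw [h2] at h1
      rw [hd0def] at hetad ⊢
      linarith [hetad, h1]
    have F1 : 0 ≤ (c1 - eps*al) * n t 2 := mul_nonneg (by linarith only [hepsal]) hI2.le
    have F2 : 0 ≤ ((al-1)*((1-q)*D)*n t 0 - mu2 - d0/2) * n t 3 :=
      mul_nonneg (by linarith only [hcoefl]) hP3.le
    have F3 : 0 ≤ (d0/2 - eps) * n t 3 := mul_nonneg (by linarith only [hepsd]) hP3.le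
    nlinarith only [F1, F2, F3]
  have hWdec : ∀ t, 0 ≤ t → -mu2 * (al * n t 2 + n t 3) ≤ al * fI t + fP t := by
    intro t ht
    have hI2 := hpos t ht 2
    have hP3 := hpos t ht 3
    have hA0 := hpos t ht 0
    rw [hWexp t]
    have h1 : 0 ≤ c1 * n t 2 := by positivity
    have h2 : 0 ≤ (al-1)*((1-q)*D)*n t 0 * n t 3 := by
      have : 0 < al - 1 := by linarith
      positivity
    have h3 : 0 ≤ mu2 * (al * n t 2) :=
      mul_nonneg hmu2.le (mul_nonneg (by linarith) hI2.le)
    nlinarith only [h1, h2, h3]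
  -- host scarcity constants
  obtain ⟨be, hbedef⟩ : ∃ be : ℝ, be = m*v/(r+v) + 1 := ⟨_, rfl⟩
  have hbe1 : 1 < be := by
    rw [hbedef]
    have : 0 < m*v/(r+v) := by positivity
    linarith
  have hbepos : 0 < be := by linarith
  have hberv : (be - 1)*(r+v) = m*v := by rw [hbedef]; field_simp; ring
  obtain ⟨cU, hcUdef⟩ : ∃ cU : ℝ, cU = min ((r+v)/be) (mu2/2) := ⟨_, rfl⟩
  have hcUpos : 0 < cU := by
    rw [hcUdef]; exact lt_min (by positivity) (by linarith)
  have hcUbe : cU * be ≤ r + v := by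
    have h1 : cU ≤ (r+v)/be := hcUdef ▸ min_le_left _ _
    calc cU * be ≤ ((r+v)/be)*be := mul_le_mul_of_nonneg_right h1 hbepos.le
      _ = r+v := by field_simp
  have hcUmu : cU ≤ mu2/2 := hcUdef ▸ min_le_right _ _
  have hcbe : 0 < (be-1)*((1-q)*D) := by
    have : 0 < be - 1 := by linarith
    positivity
  obtain ⟨th, hthdef⟩ : ∃ th : ℝ,
      th = min (mu2/(2*((be-1)*((1-q)*D)))) (min ((lam-mu)/(4*C)) (nb/2)) := ⟨_, rfl⟩
  have hthpos : 0 < th := by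
    rw [hthdef]
    exact lt_min (by positivity) (lt_min (by positivity) (by linarith))
  have hthmu : (be-1)*((1-q)*D)*th ≤ mu2/2 := by
    have h1 : th ≤ mu2/(2*((be-1)*((1-q)*D))) := hthdef ▸ min_le_left _ _
    calc (be-1)*((1-q)*D)*th ≤ (be-1)*((1-q)*D)*(mu2/(2*((be-1)*((1-q)*D)))) :=
          mul_le_mul_of_nonneg_left h1 hcbe.le
      _ = mu2/2 := by have hne : be - 1 ≠ 0 := ne_of_gt (by linarith); field_simp
  have hthlm : C * th ≤ (lam-mu)/4 := by
    have h1 : th ≤ (lam-mu)/(4*C) := hthdef ▸ le_trans (min_le_right _ _) (min_le_left _ _)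
    calc C * th ≤ C * ((lam-mu)/(4*C)) := mul_le_mul_of_nonneg_left h1 hC.le
      _ = (lam-mu)/4 := by field_simp
  have hthnb : th ≤ nb/2 := hthdef ▸ le_trans (min_le_right _ _) (min_le_right _ _)
  have hUexp : ∀ t : ℝ, be * fI t + fP t
      = (m*v - be*(r+v)) * n t 2 + ((be-1)*((1-q)*D)*n t 0 - mu2) * n t 3 := by
    intro t; simp only [hfI, hfP]; ring
  have hUdec : ∀ t, 0 ≤ t → n t 0 ≤ th →
      be * fI t + fP t ≤ -cU * (be * n t 2 + n t 3) := by
    intro t ht hAt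
    have hI2 := hpos t ht 2
    have hP3 := hpos t ht 3
    rw [hUexp t]
    have hmvbe : m*v - be*(r+v) = -(r+v) := by linarith only [hberv]
    have hcoefu : (be-1)*((1-q)*D)*n t 0 ≤ mu2/2 := by
      calc (be-1)*((1-q)*D)*n t 0 ≤ (be-1)*((1-q)*D)*th :=
            mul_le_mul_of_nonneg_left hAt hcbe.le
        _ ≤ mu2/2 := hthmu
    have F1 : 0 ≤ (r + v - cU*be) * n t 2 := mul_nonneg (by linarith only [hcUbe]) hI2.le
    have F2 : 0 ≤ (mu2/2 - cU) * n t 3 := mul_nonneg (by linarith only [hcUmu]) hP3.le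
    have F3 : 0 ≤ (mu2/2 - (be-1)*((1-q)*D)*n t 0) * n t 3 :=
      mul_nonneg (by linarith only [hcoefu]) hP3.le
    have F0 : (m*v - be*(r+v)) * n t 2 = -(r+v) * n t 2 := by rw [hmvbe]
    nlinarith only [F0, F1, F2, F3]
  -- global exponential lower rate for the active host
  obtain ⟨K2, hK2pos, hAK2⟩ : ∃ K2, 0 < K2 ∧ ∀ t, 0 ≤ t → -K2 * n t 0 ≤ fA t := by
    refine ⟨|lam - mu| + C*B + D*B + 1, by positivity, ?_⟩
    intro t ht
    have h0 := hpos t ht 0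
    have h1 := hpos t ht 1
    have h2 := hpos t ht 2
    have h3 := (hBd t ht).2.2.2
    have hsum := hN1 t ht
    have habs : -|lam - mu| ≤ lam - mu := neg_abs_le _
    have hcoef : -(|lam - mu| + C*B + D*B + 1)
        ≤ lam - mu - C * (n t 0 + n t 1 + n t 2) - D * n t 3 := by
      have e1 : C * (n t 0 + n t 1 + n t 2) ≤ C * B :=
        mul_le_mul_of_nonneg_left (by linarith only [hsum, hBB1]) hC.le
      have e2 : D * n t 3 ≤ D * B := mul_le_mul_of_nonneg_left h3 hD.le
      have e3 : 0 ≤ C * B := by positivity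
      have e4 : 0 ≤ D * B := by positivity
      linarith only [habs, e1, e2, e3, e4]
    have hmul := mul_le_mul_of_nonneg_left hcoef h0.le
    simp only [hfA]
    nlinarith only [hmul, mul_nonneg hsig.le h1.le, mul_nonneg hr.le h2.le]
  -- dormant-cell decay when the virus level is small
  obtain ⟨cd2, hcd2def⟩ : ∃ cd2 : ℝ, cd2 = 2*q*D*B/sig + 1 := ⟨_, rfl⟩
  have hcd2pos : 0 < cd2 := by
    rw [hcd2def]
    have : 0 ≤ 2*q*D*B/sig := by positivity
    linarith
  have hdormant : ∀ w, 0 < w → ∀ t, 0 ≤ t → n t 3 ≤ w → cd2*w ≤ n t 1 →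
      fD t ≤ -(sig*w) := by
    intro w hw t ht hPw hDw
    simp only [hfD]
    have h0 := (hBd t ht).1
    have h3 := hpos t ht 3
    have h1 := hpos t ht 1
    have e1 : q*D*n t 0*n t 3 ≤ q*D*B*w := by
      have ha : q*D*n t 0 ≤ q*D*B := mul_le_mul_of_nonneg_left h0 (by positivity)
      exact mul_le_mul ha hPw h3.le (by positivity)
    have e2 : sig*(cd2*w) = 2*q*D*B*w + sig*w := by
      rw [hcd2def]
      field_simp
    have e3 : sig*(cd2*w) ≤ sig * n t 1 := mul_le_mul_of_nonneg_left hDw hsig.le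
    have e4 : kap*mu*n t 1 ≥ 0 := mul_nonneg (mul_nonneg hkap hmu.le) h1.le
    have e5 : 0 ≤ q*D*B*w := by positivity
    nlinarith only [e1, e2, e3, e4, e5]
  -- host growth when scarce and everything else small
  obtain ⟨u, hudef⟩ : ∃ u : ℝ, u = (lam-mu)/(4*(C*(cd2+1) + D)) := ⟨_, rfl⟩
  have hden : 0 < C*(cd2+1) + D := by positivity
  have hupos : 0 < u := by rw [hudef]; positivity
  have huval : (C*(cd2+1) + D)*u = (lam-mu)/4 := by
    rw [hudef]
    field_simp
  have hAgrow1 : ∀ t, 0 ≤ t → n t 0 ≤ th → n t 1 ≤ cd2*u → n t 2 ≤ u → n t 3 ≤ u →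
      (lam-mu)/2 * n t 0 ≤ fA t := by
    intro t ht h0 h1 h2 h3
    have hA0 := hpos t ht 0
    have hD1 := hpos t ht 1
    have hI2 := hpos t ht 2
    have hcoef : (lam-mu)/2 ≤ lam - mu - C * (n t 0 + n t 1 + n t 2) - D * n t 3 := by
      have e1 : C * (n t 0 + n t 1 + n t 2) ≤ C*th + C*(cd2*u) + C*u := by
        have := mul_le_mul_of_nonneg_left (by linarith only [h0, h1, h2] :
          n t 0 + n t 1 + n t 2 ≤ th + cd2*u + u) hC.le
        linarith only [this, mul_le_mul_of_nonneg_left (le_refl (th + cd2*u + u)) hC.le]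
      have e2 : D * n t 3 ≤ D*u := mul_le_mul_of_nonneg_left h3 hD.le
      have e3 : C*(cd2*u) + C*u + D*u = (C*(cd2+1) + D)*u := by ring
      linarith only [e1, e2, hthlm, huval, e3]
    have hmul := mul_le_mul_of_nonneg_left hcoef hA0.le
    simp only [hfA]
    nlinarith only [hmul, mul_nonneg hsig.le hD1.le, mul_nonneg hr.le hI2.le]
  -- time constants for the host recovery argument
  obtain ⟨TU, hTUdef⟩ : ∃ TU : ℝ, TU = (be+1)*B/(cU*u) := ⟨_, rfl⟩
  have hTUpos : 0 < TU := by rw [hTUdef]; positivity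
  obtain ⟨Td, hTddef⟩ : ∃ Td : ℝ, Td = B/(sig*u) := ⟨_, rfl⟩
  have hTdpos : 0 < Td := by rw [hTddef]; positivity
  obtain ⟨Tpre, hTpredef⟩ : ∃ Tpre : ℝ, Tpre = TU + Td := ⟨_, rfl⟩
  have hTprepos : 0 < Tpre := by rw [hTpredef]; linarith
  obtain ⟨g2, hg2def⟩ : ∃ g2 : ℝ, g2 = (lam-mu)/2 := ⟨_, rfl⟩
  have hg2pos : 0 < g2 := by rw [hg2def]; linarith
  obtain ⟨th3, hth3def⟩ : ∃ th3 : ℝ, th3 = min th (n 0 0) := ⟨_, rfl⟩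
  have hth3pos : 0 < th3 := by rw [hth3def]; exact lt_min hthpos (hinit 0)
  have hth3th : th3 ≤ th := hth3def ▸ min_le_left _ _
  obtain ⟨thmid, hthmiddef⟩ : ∃ thmid : ℝ, thmid = th3 * Real.exp (-K2*Tpre) := ⟨_, rfl⟩
  have hthmidpos : 0 < thmid := by rw [hthmiddef]; positivity
  have hthmidle : thmid ≤ th3 := by
    rw [hthmiddef]
    have h1 : Real.exp (-K2*Tpre) ≤ 1 := Real.exp_le_one_iff.2 (by nlinarith only [hK2pos, hTprepos])
    nlinarith only [h1, hth3pos, Real.exp_pos (-K2*Tpre)]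
  obtain ⟨Tc, hTcdef⟩ : ∃ Tc : ℝ, Tc = Real.log (th/thmid)/g2 + 1 := ⟨_, rfl⟩
  have hTcpos : 0 < Tc := by
    rw [hTcdef]
    have h1 : (1:ℝ) ≤ th/thmid := (one_le_div hthmidpos).2 (le_trans hthmidle hth3th)
    have h2 : 0 ≤ Real.log (th/thmid) := Real.log_nonneg h1
    have := div_nonneg h2 hg2pos.le
    linarith
  obtain ⟨Th, hThdef⟩ : ∃ Th : ℝ, Th = Tpre + Tc := ⟨_, rfl⟩
  have hThpos : 0 < Th := by rw [hThdef]; linarith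
  obtain ⟨th2, hth2def⟩ : ∃ th2 : ℝ, th2 = th3 * Real.exp (-K2*Th) := ⟨_, rfl⟩
  have hth2pos : 0 < th2 := by rw [hth2def]; positivity
  have hth2th3 : th2 < th3 := by
    rw [hth2def]
    have h1 : Real.exp (-K2*Th) < 1 := by
      rw [← Real.exp_zero]
      exact Real.exp_lt_exp.2 (by nlinarith only [hK2pos, hThpos])
    nlinarith only [h1, hth3pos]
  have hth2th : th2 < th := lt_of_lt_of_le hth2th3 hth3th
  -- the global lower bound for the active host population
  have hHost : ∀ t, 0 ≤ t → th2 ≤ n t 0 := by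
    by_contra hcon
    push_neg at hcon
    obtain ⟨ts, hts0, htsA⟩ := hcon
    obtain ⟨a, ha0, haT, hamin, hale⟩ := lastCrossing (f := fun t => n t 0) hts0
      (fun t ht => hcontA t ht.1) (lt_trans htsA hth2th)
    rw [← hth3def] at hamin
    have gronA : ∀ b, a ≤ b → b ≤ ts → th3 * Real.exp (-K2*(b - a)) ≤ n b 0 := by
      intro b hab hbts
      have hgr := gronwall_lower hab (f := fun t => n t 0) (f' := fA)
        (fun t htI => hA t (le_trans ha0 htI.1))
        (fun t htI => hAK2 t (le_trans ha0 htI.1))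
      have hexp : 0 < Real.exp (-K2*(b-a)) := Real.exp_pos _
      nlinarith only [hgr, hamin, hexp]
    by_cases hcase : ts - a ≤ Th
    · have h1 : th3 * Real.exp (-K2*(ts - a)) ≤ n ts 0 := gronA ts haT (le_refl ts)
      have h2 : Real.exp (-K2*Th) ≤ Real.exp (-K2*(ts-a)) :=
        Real.exp_le_exp.2 (by nlinarith only [hK2pos, hcase])
      have h3 := mul_le_mul_of_nonneg_left h2 hth3pos.le
      rw [hth2def] at htsA
      linarith only [h1, h3, htsA]
    · push_neg at hcase
      have hfit : a + Th ≤ ts := by linarith only [hcase]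
      have hTT : TU ≤ Tpre := by rw [hTpredef]; linarith only [hTdpos]
      have hTpT : Tpre ≤ Th := by rw [hThdef]; linarith only [hTcpos]
      have hfitpre : a + Tpre ≤ ts := by linarith only [hfit, hTpT]
      have hfitU : a + TU ≤ ts := by linarith only [hfitpre, hTT]
      -- Phase 1: the virus load U = be*I + P decays below u by time a + TU
      have hUd : ∀ t ∈ Icc a ts, HasDerivAt (fun s => be * n s 2 + n s 3)
          (be * fI t + fP t) t := fun t htI =>
        (((hIv t (le_trans ha0 htI.1)).const_mul be).add (hP t (le_trans ha0 htI.1)))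
      have hUdec' : ∀ t ∈ Icc a ts, u ≤ be * n t 2 + n t 3 →
          be * fI t + fP t ≤ -(cU*u) := by
        intro t htI hu
        have h1 := hUdec t (le_trans ha0 htI.1) (hale t htI)
        have h2 : cU * u ≤ cU * (be * n t 2 + n t 3) := mul_le_mul_of_nonneg_left hu hcUpos.le
        linarith only [h1, h2]
      have hUstart : be * n a 2 + n a 3 ≤ (be+1)*B := by
        have h2 := (hBd a ha0).2.2.1
        have h3 := (hBd a ha0).2.2.2
        nlinarith only [h3, mul_le_mul_of_nonneg_left h2 hbepos.le]
      have hU1 : be * n (a+TU) 2 + n (a+TU) 3 ≤ u := by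
        refine forced_decay (by positivity) hUd hUstart hUdec' (a+TU)
          ⟨by linarith only [hTUpos], hfitU⟩ ?_
        have hden : 0 < cU*u := by positivity
        have h1 : ((be+1)*B - u)/(cU*u) ≤ (be+1)*B/(cU*u) := by
          rw [div_le_div_iff₀ hden hden]
          nlinarith only [hupos, hden]
        rw [← hTUdef] at h1
        linarith only [h1]
      have hUsub : Icc (a+TU) ts ⊆ Icc a ts :=
        Icc_subset_Icc (by linarith only [hTUpos]) (le_refl ts)
      have hUsmall : ∀ t ∈ Icc (a+TU) ts, be * n t 2 + n t 3 ≤ u := by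
        refine barrier_le (fun s hs => hUd s (hUsub hs)) hU1 ?_
        intro s hs heq
        have := hUdec' s (hUsub hs) (le_of_eq heq.symm)
        nlinarith only [this, mul_pos hcUpos hupos]
      have ht0' : ∀ t ∈ Icc (a+TU) ts, (0:ℝ) ≤ t := by
        intro t htI
        linarith only [htI.1, ha0, hTUpos]
      have hIsmall : ∀ t ∈ Icc (a+TU) ts, n t 2 ≤ u := by
        intro t htI
        have h1 := hUsmall t htI
        have h2 := hpos t (ht0' t htI) 3
        have h3 := hpos t (ht0' t htI) 2
        have hbeI : 0 ≤ (be - 1) * n t 2 := mul_nonneg (by linarith only [hbe1]) h3.le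
        linarith only [h1, h2, hbeI]
      have hPsmall : ∀ t ∈ Icc (a+TU) ts, n t 3 ≤ u := by
        intro t htI
        have h1 := hUsmall t htI
        have h3 := hpos t (ht0' t htI) 2
        nlinarith only [h1, h3, hbepos]
      -- Phase 2: dormant cells decay below cd2*u by time a + Tpre
      have hDd : ∀ t ∈ Icc (a+TU) ts, HasDerivAt (fun s => n s 1) (fD t) t :=
        fun t htI => hDm t (ht0' t htI)
      have hDstart : n (a+TU) 1 ≤ B := (hBd (a+TU) (by linarith only [ha0, hTUpos])).2.1
      have hDdec : ∀ t ∈ Icc (a+TU) ts, cd2*u ≤ n t 1 → fD t ≤ -(sig*u) := by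
        intro t htI hcd
        exact hdormant u hupos t (ht0' t htI) (hPsmall t htI) hcd
      have hD1 : n (a+Tpre) 1 ≤ cd2*u := by
        refine forced_decay (by positivity) hDd hDstart hDdec (a+Tpre)
          ⟨by linarith only [hTT], hfitpre⟩ ?_
        have hden : 0 < sig*u := by positivity
        have h1 : (B - cd2*u)/(sig*u) ≤ B/(sig*u) := by
          rw [div_le_div_iff₀ hden hden]
          nlinarith only [hden, mul_pos hcd2pos hupos]
        rw [← hTddef] at h1
        rw [hTpredef]
        linarith only [h1]
      have hDsub : Icc (a+Tpre) ts ⊆ Icc (a+TU) ts :=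
        Icc_subset_Icc (by linarith only [hTT]) (le_refl ts)
      have hDsmall : ∀ t ∈ Icc (a+Tpre) ts, n t 1 ≤ cd2*u := by
        refine barrier_le (fun s hs => hDd s (hDsub hs)) hD1 ?_
        intro s hs heq
        have := hDdec s (hDsub hs) (le_of_eq heq.symm)
        nlinarith only [this, mul_pos hsig hupos]
      -- Phase 3: the host grows back up to th, a contradiction
      have hAmid : thmid ≤ n (a+Tpre) 0 := by
        have h1 := gronA (a+Tpre) (by linarith only [hTprepos]) hfitpre
        have h2 : a + Tpre - a = Tpre := by ring
        rw [h2] at h1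
        rw [hthmiddef]
        exact h1
      have hgrow : ∀ t ∈ Icc (a+Tpre) (a+Th), -(-g2) * n t 0 ≤ fA t := by
        intro t htI
        have hsub1 : t ∈ Icc (a+Tpre) ts := ⟨htI.1, le_trans htI.2 hfit⟩
        have hsub2 : t ∈ Icc (a+TU) ts := hDsub hsub1
        have ht0 : (0:ℝ) ≤ t := ht0' t hsub2
        have hkey := hAgrow1 t ht0
          (hale t ⟨by linarith only [htI.1, ha0, hTprepos], hsub1.2⟩)
          (hDsmall t hsub1) (hIsmall t hsub2) (hPsmall t hsub2)
        have hg : -(-g2) * n t 0 = (lam-mu)/2 * n t 0 := by rw [hg2def]; ring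
        rw [hg]
        exact hkey
      have hfinal := gronwall_lower (K := -g2) (by linarith only [hTpT] : a+Tpre ≤ a+Th)
        (fun t htI => hA t (ht0' t (hDsub ⟨htI.1, le_trans htI.2 hfit⟩))) hgrow
      have hexpeq : -(-g2)*((a+Th) - (a+Tpre)) = g2*Tc := by rw [hThdef]; ring
      rw [hexpeq] at hfinal
      have hgTc : Real.exp (g2*Tc) = (th/thmid) * Real.exp g2 := by
        have h1 : g2*Tc = Real.log (th/thmid) + g2 := by
          rw [hTcdef]
          field_simp
        rw [h1, Real.exp_add, Real.exp_log (by positivity)]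
      have hmmid : thmid * ((th/thmid) * Real.exp g2) = th * Real.exp g2 := by
        field_simp
      have hexpg1 : 1 < Real.exp g2 := by
        rw [← Real.exp_zero]
        exact Real.exp_lt_exp.2 hg2pos
      have hEq : thmid * Real.exp (g2*Tc) = th * Real.exp g2 := by rw [hgTc]; exact hmmid
      have hcontra : th < n (a+Th) 0 := by
        have h3 := mul_le_mul_of_nonneg_right hAmid (Real.exp_pos (g2*Tc)).le
        rw [hEq] at h3
        nlinarith only [h3, hfinal, hexpg1, hthpos]
      have hALe := hale (a+Th) ⟨by linarith only [hThpos], hfit⟩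
      linarith only [hcontra, hALe]
  -- constants for the virus persistence argument
  obtain ⟨w, hwdef⟩ : ∃ w : ℝ, w = C*eta/(2*(C*(cd2+1)+D)) := ⟨_, rfl⟩
  have hwpos : 0 < w := by rw [hwdef]; positivity
  have hwval : (C*(cd2+1)+D)*w = C*eta/2 := by
    rw [hwdef]
    field_simp
  have hCnb' : C * nb = lam - mu := by rw [hnbdef]; exact hCnb
  have hAgrow2 : ∀ t, 0 ≤ t → n t 0 ≤ nb - eta → n t 1 ≤ cd2*w → n t 2 ≤ w → n t 3 ≤ w →
      (C*eta/2) * n t 0 ≤ fA t := by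
    intro t ht h0 h1 h2 h3
    have hA0 := hpos t ht 0
    have hD1 := hpos t ht 1
    have hI2 := hpos t ht 2
    have hcoef : C*eta/2 ≤ lam - mu - C * (n t 0 + n t 1 + n t 2) - D * n t 3 := by
      have e1' : C * (n t 0 + n t 1 + n t 2) ≤ C * ((nb-eta) + cd2*w + w) :=
        mul_le_mul_of_nonneg_left (by linarith only [h0, h1, h2]) hC.le
      have e1 : C * ((nb-eta) + cd2*w + w) = C*(nb-eta) + C*(cd2*w) + C*w := by ring
      have e2 : D * n t 3 ≤ D*w := mul_le_mul_of_nonneg_left h3 hD.le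
      have e3 : C*(cd2*w) + C*w + D*w = (C*(cd2+1) + D)*w := by ring
      have e4 : C*(nb-eta) = C*nb - C*eta := by ring
      linarith only [e1', e1, e2, e3, e4, hwval, hCnb']
    have hmul := mul_le_mul_of_nonneg_left hcoef hA0.le
    simp only [hfA]
    nlinarith only [hmul, mul_nonneg hsig.le hD1.le, mul_nonneg hr.le hI2.le]
  obtain ⟨T1, hT1def⟩ : ∃ T1 : ℝ, T1 = B/(sig*w) := ⟨_, rfl⟩
  have hT1pos : 0 < T1 := by rw [hT1def]; positivity
  obtain ⟨g3, hg3def⟩ : ∃ g3 : ℝ, g3 = C*eta/2 := ⟨_, rfl⟩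
  have hg3pos : 0 < g3 := by rw [hg3def]; positivity
  obtain ⟨w0, hw0def⟩ : ∃ w0 : ℝ, w0 = min w (al * n 0 2 + n 0 3) := ⟨_, rfl⟩
  have hW0pos : 0 < al * n 0 2 + n 0 3 := by
    have := hinit 2; have := hinit 3
    nlinarith only [this, ‹0 < n 0 2›, halpos, mul_pos halpos (hinit 2)]
  have hw0pos : 0 < w0 := by rw [hw0def]; exact lt_min hwpos hW0pos
  have hw0w : w0 ≤ w := hw0def ▸ min_le_left _ _
  have hth2nb : th2 ≤ nb - eta := by
    have h1 : th2 < th := hth2th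
    have h2 : th ≤ nb/2 := hthnb
    linarith only [h1, h2, hetanb]
  obtain ⟨T6, hT6def⟩ : ∃ T6 : ℝ, T6 = Real.log ((nb-eta)/th2)/g3 + 1 := ⟨_, rfl⟩
  have hnbeta : 0 < nb - eta := by linarith only [hetanb, hnbpos, hetapos]
  have hT6pos : 0 < T6 := by
    rw [hT6def]
    have h1 : (1:ℝ) ≤ (nb-eta)/th2 := (one_le_div hth2pos).2 hth2nb
    have h2 : 0 ≤ Real.log ((nb-eta)/th2) := Real.log_nonneg h1
    have := div_nonneg h2 hg3pos.le
    linarith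
  obtain ⟨TW, hTWdef⟩ : ∃ TW : ℝ, TW = T1 + T6 := ⟨_, rfl⟩
  have hTWpos : 0 < TW := by rw [hTWdef]; linarith only [hT1pos, hT6pos]
  obtain ⟨rho1, hrho1def⟩ : ∃ rho1 : ℝ, rho1 = w0 * Real.exp (-mu2*TW) := ⟨_, rfl⟩
  have hrho1pos : 0 < rho1 := by rw [hrho1def]; positivity
  have hrho1w : rho1 < w := by
    rw [hrho1def]
    have h1 : Real.exp (-mu2*TW) < 1 := by
      rw [← Real.exp_zero]
      exact Real.exp_lt_exp.2 (by nlinarith only [hmu2, hTWpos])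
    nlinarith only [h1, hw0pos, hw0w, hwpos]
  -- the virus persists uniformly
  have hWlow : ∀ t, 0 ≤ t → rho1 ≤ al * n t 2 + n t 3 := by
    by_contra hcon
    push_neg at hcon
    obtain ⟨ts, hts0, htsW⟩ := hcon
    obtain ⟨a, ha0, haT, hamin, hWle⟩ := lastCrossing (f := fun t => al * n t 2 + n t 3) hts0
      (fun t ht => (continuousAt_const.mul (hcontI t ht.1)).add (hcontP t ht.1))
      (lt_trans htsW hrho1w)
    have hamin' : w0 ≤ al * n a 2 + n a 3 := by
      rw [hw0def]
      simpa using hamin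
    have hWd : ∀ t ∈ Icc a ts, HasDerivAt (fun s => al * n s 2 + n s 3)
        (al * fI t + fP t) t := fun t htI =>
      ((hIv t (le_trans ha0 htI.1)).const_mul al).add (hP t (le_trans ha0 htI.1))
    have gronW : ∀ b, a ≤ b → b ≤ ts → w0 * Real.exp (-mu2*(b-a)) ≤ al * n b 2 + n b 3 := by
      intro b hab hbts
      have hgr := gronwall_lower hab (f := fun t => al * n t 2 + n t 3)
        (f' := fun t => al * fI t + fP t)
        (fun t htI => hWd t ⟨htI.1, le_trans htI.2 hbts⟩)
        (fun t htI => hWdec t (le_trans ha0 htI.1))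
      have h2 := mul_le_mul_of_nonneg_right hamin' (Real.exp_pos (-mu2*(b-a))).le
      linarith only [hgr, h2]
    by_cases hcase : ts - a ≤ TW
    · have h1 := gronW ts haT (le_refl ts)
      have h2 : Real.exp (-mu2*TW) ≤ Real.exp (-mu2*(ts-a)) :=
        Real.exp_le_exp.2 (by nlinarith only [hmu2, hcase])
      have h3 := mul_le_mul_of_nonneg_left h2 hw0pos.le
      rw [hrho1def] at htsW
      linarith only [h1, h3, htsW]
    · push_neg at hcase
      have hfit : a + TW ≤ ts := by linarith only [hcase]
      have hT1TW : T1 ≤ TW := by rw [hTWdef]; linarith only [hT6pos]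
      have hfit1 : a + T1 ≤ ts := by linarith only [hfit, hT1TW]
      have ht0a : ∀ t ∈ Icc a ts, (0:ℝ) ≤ t := fun t htI => le_trans ha0 htI.1
      -- small components on [a, ts]
      have hPw : ∀ t ∈ Icc a ts, n t 3 ≤ w := by
        intro t htI
        have h1 := hWle t htI
        have h2 := hpos t (ht0a t htI) 2
        nlinarith only [h1, h2, halpos, mul_pos halpos h2]
      have hIw : ∀ t ∈ Icc a ts, n t 2 ≤ w := by
        intro t htI
        have h1 := hWle t htI
        have h2 := hpos t (ht0a t htI) 2
        have h3 := hpos t (ht0a t htI) 3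
        have h4 : 0 ≤ (al - 1) * n t 2 := mul_nonneg (by linarith only [hal1]) h2.le
        linarith only [h1, h3, h4]
      -- dormant cells decay below cd2*w by time a + T1
      have hDd2 : ∀ t ∈ Icc a ts, HasDerivAt (fun s => n s 1) (fD t) t :=
        fun t htI => hDm t (ht0a t htI)
      have hDdec2 : ∀ t ∈ Icc a ts, cd2*w ≤ n t 1 → fD t ≤ -(sig*w) :=
        fun t htI hcd => hdormant w hwpos t (ht0a t htI) (hPw t htI) hcd
      have hD1' : n (a+T1) 1 ≤ cd2*w := by
        refine forced_decay (by positivity) hDd2 ((hBd a ha0).2.1) hDdec2 (a+T1)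
          ⟨by linarith only [hT1pos], hfit1⟩ ?_
        have hden : 0 < sig*w := by positivity
        have h1 : (B - cd2*w)/(sig*w) ≤ B/(sig*w) := by
          rw [div_le_div_iff₀ hden hden]
          nlinarith only [hden, mul_pos hcd2pos hwpos]
        rw [← hT1def] at h1
        linarith only [h1]
      have hDsub2 : Icc (a+T1) ts ⊆ Icc a ts :=
        Icc_subset_Icc (by linarith only [hT1pos]) (le_refl ts)
      have hDw : ∀ t ∈ Icc (a+T1) ts, n t 1 ≤ cd2*w := by
        refine barrier_le (fun s hs => hDd2 s (hDsub2 hs)) hD1' ?_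
        intro s hs heq
        have := hDdec2 s (hDsub2 hs) (le_of_eq heq.symm)
        nlinarith only [this, mul_pos hsig hwpos]
      -- the host climbs above nb - eta and stays there
      have hexists : ∃ s, s ∈ Icc (a+T1) (a+TW) ∧ nb - eta ≤ n s 0 := by
        by_contra hcl
        push_neg at hcl
        have hgrow : ∀ t ∈ Icc (a+T1) (a+TW), -(-g3) * n t 0 ≤ fA t := by
          intro t htI
          have hsub : t ∈ Icc (a+T1) ts := ⟨htI.1, le_trans htI.2 hfit⟩
          have hkey := hAgrow2 t (ht0a t (hDsub2 hsub)) (hcl t htI).le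
            (hDw t hsub) (hIw t (hDsub2 hsub)) (hPw t (hDsub2 hsub))
          have hg : -(-g3) * n t 0 = (C*eta/2) * n t 0 := by rw [hg3def]; ring
          rw [hg]
          exact hkey
        have hfin := gronwall_lower (K := -g3) (by linarith only [hT1TW] : a+T1 ≤ a+TW)
          (fun t htI => hA t (ht0a t (hDsub2 ⟨htI.1, le_trans htI.2 hfit⟩))) hgrow
        have hexpeq : -(-g3)*((a+TW) - (a+T1)) = g3*T6 := by rw [hTWdef]; ring
        rw [hexpeq] at hfin
        have hAT1 : th2 ≤ n (a+T1) 0 := hHost (a+T1) (by linarith only [ha0, hT1pos])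
        have hgT6 : Real.exp (g3*T6) = ((nb-eta)/th2) * Real.exp g3 := by
          have h1 : g3*T6 = Real.log ((nb-eta)/th2) + g3 := by
            rw [hT6def]
            field_simp
          rw [h1, Real.exp_add, Real.exp_log (by positivity)]
        have hEq : th2 * Real.exp (g3*T6) = (nb-eta) * Real.exp g3 := by
          rw [hgT6]
          field_simp
        have hexpg1 : 1 < Real.exp g3 := by
          rw [← Real.exp_zero]
          exact Real.exp_lt_exp.2 hg3pos
        have h3 := mul_le_mul_of_nonneg_right hAT1 (Real.exp_pos (g3*T6)).le
        rw [hEq] at h3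
        have hcontra : nb - eta < n (a+TW) 0 := by
          nlinarith only [h3, hfin, hexpg1, hnbeta]
        have := hcl (a+TW) ⟨by linarith only [hT1TW], le_refl _⟩
        linarith only [hcontra, this]
      obtain ⟨s, hsI, hsA⟩ := hexists
      -- barrier: the host stays above nb - eta on [s, ts]
      have hAbig : ∀ t ∈ Icc s ts, -(n t 0) ≤ -(nb-eta) := by
        have hsub3 : Icc s ts ⊆ Icc (a+T1) ts :=
          Icc_subset_Icc hsI.1 (le_refl ts)
        refine barrier_le (f' := fun t => -(fA t))
          (fun t htI => (hA t (ht0a t (hDsub2 (hsub3 htI)))).neg)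
          (by linarith only [hsA]) ?_
        intro t htI heq
        have hAeq : n t 0 = nb - eta := by linarith only [heq]
        have hkey := hAgrow2 t (ht0a t (hDsub2 (hsub3 htI))) hAeq.le
          (hDw t (hsub3 htI)) (hIw t (hDsub2 (hsub3 htI))) (hPw t (hDsub2 (hsub3 htI)))
        rw [hAeq] at hkey
        have h9 : 0 < C*eta/2 * (nb - eta) := by positivity
        show -(fA t) < 0
        exact neg_lt_zero.mpr (lt_of_lt_of_le h9 hkey)
      -- the virus grows from a+TW to ts
      have haTW : a ≤ a + TW := by linarith only [hTWpos]
      have hWgr : ∀ t ∈ Icc (a+TW) ts, -(-eps) * (al * n t 2 + n t 3) ≤ al * fI t + fP t := by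
        intro t htI
        have hsub4 : t ∈ Icc s ts := ⟨le_trans hsI.2 htI.1, htI.2⟩
        have hAb := hAbig t hsub4
        have hkey := hWgrow t (ht0a t ⟨le_trans haTW htI.1, htI.2⟩)
          (by linarith only [hAb])
        have hg : -(-eps) * (al * n t 2 + n t 3) = eps * (al * n t 2 + n t 3) := by ring
        rw [hg]
        exact hkey
      have hfin2 := gronwall_lower (K := -eps) hfit
        (fun t htI => hWd t ⟨le_trans haTW htI.1, htI.2⟩) hWgr
      have hone : (1:ℝ) ≤ Real.exp (-(-eps)*(ts-(a+TW))) := by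
        rw [← Real.exp_zero]
        exact Real.exp_le_exp.2 (by nlinarith only [hepspos, hfit])
      have hWa : w0 * Real.exp (-mu2*((a+TW)-a)) ≤ al * n (a+TW) 2 + n (a+TW) 3 :=
        gronW (a+TW) (by linarith only [hTWpos]) hfit
      have heq2 : -mu2*((a+TW)-a) = -mu2*TW := by ring
      rw [heq2, ← hrho1def] at hWa
      have hWTWpos : 0 < al * n (a+TW) 2 + n (a+TW) 3 := by
        have hi := hpos (a+TW) (by linarith only [ha0, hTWpos]) 2
        have hp := hpos (a+TW) (by linarith only [ha0, hTWpos]) 3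
        nlinarith only [hi, hp, halpos, mul_pos halpos hi]
      nlinarith only [hfin2, hone, hWa, htsW, hWTWpos]
  -- conclusion
  refine ⟨rho1/al, by positivity, ?_⟩
  have hsimp : ∀ t : ℝ, (∑ i : Fin 4, |n t i - ![(lam - mu) / C, 0, 0, 0] i|)
      = |n t 0 - (lam-mu)/C| + |n t 1| + |n t 2| + |n t 3| := by
    intro t
    rw [Fin.sum_univ_four]
    norm_num
    show _ + _ + |n t 2 - 0| + |n t 3 - 0| = _
    simp
  apply Filter.le_liminf_of_le
  · apply Filter.isCoboundedUnder_ge_of_eventually_le atTop (x := (lam-mu)/C + 4*B)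
    filter_upwards [eventually_ge_atTop (0:ℝ)] with t ht
    have h0 := hpos t ht 0
    have h1 := hpos t ht 1
    have h2 := hpos t ht 2
    have h3 := hpos t ht 3
    have hb := hBd t ht
    rw [hsimp t]
    have e0 : |n t 0 - (lam-mu)/C| ≤ n t 0 + (lam-mu)/C :=
      abs_le.2 ⟨by linarith only [h0, hnb0], by linarith only [h0, hnb0]⟩
    rw [abs_of_pos h1, abs_of_pos h2, abs_of_pos h3]
    linarith only [e0, hb.1, hb.2.1, hb.2.2.1, hb.2.2.2]
  · filter_upwards [eventually_ge_atTop (0:ℝ)] with t ht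
    have hW := hWlow t ht
    have h2 := hpos t ht 2
    have h3 := hpos t ht 3
    rw [hsimp t, abs_of_pos h2, abs_of_pos h3]
    have e0 : 0 ≤ |n t 0 - (lam-mu)/C| := abs_nonneg _
    have e1 : 0 ≤ |n t 1| := abs_nonneg _
    have hkey : rho1/al ≤ n t 2 + n t 3 := by
      rw [div_le_iff₀ halpos]
      have hp2 : 0 ≤ (al-1) * n t 3 := mul_nonneg (by linarith only [hal1]) h3.le
      nlinarith only [hW, hp2]
    linarith only [e0, e1, hkey]
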